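/- For any dissimilarity map δ on a finite set X with |X| = n ≥ 3, and any taxon a ∈ X, if δ' is the shift of δ by ε around a (i.e., δ'(a,x) = δ(a,x) + ε for all x ≠ a and δ'(x,y) = δ(x,y) otherwise), then for every pair of distinct taxa x, y ∈ X, the neighbor-joining Q-criterion satisfies Q_{δ'}(x,y) = Q_δ(x,y) - 2ε/(n-2) · c, where the change is the same constant for all pairs; in particular, a pair minimizes Q_{δ'} if and only if it minimizes Q_δ. -/

import Mathlib

open Finset

/-- The neighbor-joining Q-criterion for a dissimilarity map `δ` on `X`:
`Q_δ(i,j) = δ(i,j) - (1/(n-2)) (∑_{k≠i} δ(i,k) + ∑_{k≠j} δ(j,k))` with `n = |X|`. -/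
noncomputable def njQ {X : Type*} [Fintype X] [DecidableEq X]
    (δ : X → X → ℝ) (i j : X) : ℝ :=
  δ i j - (1 / ((Fintype.card X : ℝ) - 2)) *
    ((∑ k ∈ Finset.univ.erase i, δ i k) + (∑ k ∈ Finset.univ.erase j, δ j k))

/-- shifting a dissimilarity map by `ε` around a taxon `a` changes the
Q-criterion of every pair by the same constant `-2ε/(n-2)`; in particular a pair
minimizes `Q_{δ'}` iff it minimizes `Q_δ`. -/
theorem statement_0 {X : Type*} [Fintype X] [DecidableEq X]
    (hn : 3 ≤ Fintype.card X)
    (δ δ' : X → X → ℝ)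
    (hsym : ∀ x y, δ x y = δ y x) (hdiag : ∀ x, δ x x = 0)
    (hsym' : ∀ x y, δ' x y = δ' y x) (hdiag' : ∀ x, δ' x x = 0)
    (a : X) (ε : ℝ)
    (hshift : ∀ x, x ≠ a → δ' a x = δ a x + ε)
    (hrest : ∀ x y, x ≠ a → y ≠ a → δ' x y = δ x y) :
    (∀ x y : X, x ≠ y →
        njQ δ' x y = njQ δ x y - 2 * ε / ((Fintype.card X : ℝ) - 2)) ∧
    (∀ x y : X, x ≠ y →
        ((∀ p q : X, p ≠ q → njQ δ' x y ≤ njQ δ' p q) ↔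
         (∀ p q : X, p ≠ q → njQ δ x y ≤ njQ δ p q))) := by
  set n : ℝ := (Fintype.card X : ℝ) with hnreal
  have hn3 : (3 : ℝ) ≤ n := by rw [hnreal]; exact_mod_cast hn
  have hne : n - 2 ≠ 0 := by linarith
  -- row sum change for x ≠ a
  have hrow : ∀ x : X, x ≠ a →
      ∑ k ∈ Finset.univ.erase x, δ' x k = (∑ k ∈ Finset.univ.erase x, δ x k) + ε := by
    intro x hx
    have hdiff : ∑ k ∈ Finset.univ.erase x, (δ' x k - δ x k) = ε := by
      rw [Finset.sum_eq_single_of_mem a (Finset.mem_erase.2 ⟨Ne.symm hx, Finset.mem_univ a⟩)]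
      · rw [hsym' x a, hshift x hx, hsym x a]; ring
      · intro b _ hb
        by_cases hbx : b = x
        · subst hbx; rw [hdiag, hdiag']; ring
        · rw [hrest x b hx hb]; ring
    rw [Finset.sum_sub_distrib] at hdiff
    linarith
  -- row sum change for a
  have hrowa : ∑ k ∈ Finset.univ.erase a, δ' a k
      = (∑ k ∈ Finset.univ.erase a, δ a k) + (n - 1) * ε := by
    have h1 : ∑ k ∈ Finset.univ.erase a, δ' a k
        = ∑ k ∈ Finset.univ.erase a, (δ a k + ε) := by
      apply Finset.sum_congr rfl
      intro k hk
      exact hshift k (Finset.mem_erase.1 hk).1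
    rw [h1, Finset.sum_add_distrib, Finset.sum_const, Finset.card_erase_of_mem (Finset.mem_univ a),
      Finset.card_univ, nsmul_eq_mul]
    have hcard : ((Fintype.card X - 1 : ℕ) : ℝ) = n - 1 := by
      have : 1 ≤ Fintype.card X := by omega
      push_cast [this]; ring
    rw [hcard]
  have key : ∀ x y : X, x ≠ y →
      njQ δ' x y = njQ δ x y - 2 * ε / ((Fintype.card X : ℝ) - 2) := by
    intro x y hxy
    unfold njQ
    rw [← hnreal]
    by_cases hxa : x = a
    · subst hxa
      have hya : y ≠ x := fun h => hxy h.symm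
      rw [hrowa, hrow y hya, hshift y hya]
      field_simp
      ring
    · by_cases hya : y = a
      · subst hya
        rw [hrowa, hrow x hxa, hsym' x y, hshift x hxa, hsym x y]
        field_simp
        ring
      · rw [hrow x hxa, hrow y hya, hrest x y hxa hya]
        field_simp
        ring
  refine ⟨key, fun x y hxy => ?_⟩
  constructor
  · intro h p q hpq
    have := h p q hpq
    rw [key x y hxy, key p q hpq] at this
    linarith
  · intro h p q hpq
    have := h p q hpq
    rw [key x y hxy, key p q hpq]
    linarith
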